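/- Force formula for the quadratic discrete potential. Let n ≥ 1, A_0, …, A_n ∈ ℝ, N ∈ ℕ, ε > 0, and on the periodic lattice ℤ/N define U(u) = Σ_{i ∈ ℤ/N} ε (1/2) Σ_{α=0}^n A_α |(D_ε^α u)_i|² for u : ℤ/N → ℝ. Then the force on particle i satisfies F_i := −(1/ε) ∂U/∂u_i = − Σ_{k=0}^n (−1)^k A_k (Δ_ε^k u)_i. -/

import Mathlib

open Finset

noncomputable section

/-- Discrete Laplacian on the periodic lattice `ℤ/N`:
`(Δ_ε u)_i = ε⁻² (u_{i+1} + u_{i-1} - 2 u_i)`. -/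
def latLap (ε : ℝ) {N : ℕ} (v : ZMod N → ℝ) : ZMod N → ℝ :=
  fun i => (v (i + 1) + v (i - 1) - 2 * v i) / ε ^ 2

/-- Right discrete derivative on the periodic lattice: `(D⁺_ε u)_i = (u_{i+1} - u_i)/ε`. -/
def latDplus (ε : ℝ) {N : ℕ} (v : ZMod N → ℝ) : ZMod N → ℝ :=
  fun i => (v (i + 1) - v i) / ε

/-- The `α`-th discrete derivative on the lattice: `D_ε^α = Δ_ε^{α/2}` for `α` even
and `D_ε^α = D⁺_ε Δ_ε^{(α-1)/2}` for `α` odd. -/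
def latD (ε : ℝ) {N : ℕ} (α : ℕ) (v : ZMod N → ℝ) : ZMod N → ℝ :=
  if α % 2 = 0 then (latLap ε)^[α / 2] v else latDplus ε ((latLap ε)^[α / 2] v)

/-- The quadratic discrete potential
`U(u) = Σ_i ε (1/2) Σ_{α=0}^n A_α |(D_ε^α u)_i|²`. -/
def Upot (n : ℕ) (A : ℕ → ℝ) (ε : ℝ) {N : ℕ} [NeZero N] (u : ZMod N → ℝ) : ℝ :=
  ∑ i : ZMod N, ε * ((1 / 2) * ∑ α ∈ Finset.range (n + 1), A α * (latD ε α u i) ^ 2)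

lemma latLap_add_smul (ε : ℝ) {N : ℕ} (v w : ZMod N → ℝ) (c : ℝ) :
    latLap ε (fun j => v j + c * w j) = fun j => latLap ε v j + c * latLap ε w j := by
  funext j; simp only [latLap]; ring

lemma latLapIter_add_smul (ε : ℝ) {N : ℕ} (m : ℕ) (v w : ZMod N → ℝ) (c : ℝ) :
    (latLap ε)^[m] (fun j => v j + c * w j)
      = fun j => (latLap ε)^[m] v j + c * (latLap ε)^[m] w j := by
  induction m with
  | zero => simp
  | succ m ih =>
      rw [Function.iterate_succ_apply', Function.iterate_succ_apply',
        Function.iterate_succ_apply', ih, latLap_add_smul]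

lemma latD_add_smul (ε : ℝ) {N : ℕ} (α : ℕ) (v w : ZMod N → ℝ) (c : ℝ) :
    latD ε α (fun j => v j + c * w j) = fun j => latD ε α v j + c * latD ε α w j := by
  unfold latD
  split
  · exact latLapIter_add_smul ε _ v w c
  · rw [latLapIter_add_smul]; funext j; simp only [latDplus]; ring

lemma sum_shift {N : ℕ} [NeZero N] (g : ZMod N → ℝ) :
    ∑ j : ZMod N, g (j + 1) = ∑ j : ZMod N, g j :=
  Fintype.sum_equiv (Equiv.addRight 1) _ _ (fun _ => rfl)

lemma shift1 {N : ℕ} [NeZero N] (v w : ZMod N → ℝ) :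
    ∑ j : ZMod N, v (j + 1) * w j = ∑ j : ZMod N, v j * w (j - 1) := by
  have := sum_shift (fun j => v j * w (j - 1))
  simpa using this

lemma shift2 {N : ℕ} [NeZero N] (v w : ZMod N → ℝ) :
    ∑ j : ZMod N, v (j - 1) * w j = ∑ j : ZMod N, v j * w (j + 1) := by
  have := sum_shift (fun j => v (j - 1) * w j)
  simpa using this.symm

lemma shift3 {N : ℕ} [NeZero N] (v w : ZMod N → ℝ) :
    ∑ j : ZMod N, v (j + 1) * w (j + 1) = ∑ j : ZMod N, v j * w j :=
  sum_shift (fun j => v j * w j)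

lemma lap_symm (ε : ℝ) {N : ℕ} [NeZero N] (v w : ZMod N → ℝ) :
    ∑ j : ZMod N, latLap ε v j * w j = ∑ j : ZMod N, v j * latLap ε w j := by
  have h4 : ∑ j : ZMod N, 2 * v j * w j = 2 * ∑ j : ZMod N, v j * w j := by
    rw [Finset.mul_sum]; exact Finset.sum_congr rfl fun j _ => mul_assoc _ _ _
  have h5 : ∑ j : ZMod N, v j * (2 * w j) = 2 * ∑ j : ZMod N, v j * w j := by
    rw [Finset.mul_sum]; exact Finset.sum_congr rfl fun j _ => by ring
  have key : ∑ j : ZMod N, (v (j+1) + v (j-1) - 2 * v j) * w j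
      = ∑ j : ZMod N, v j * (w (j+1) + w (j-1) - 2 * w j) := by
    simp only [sub_mul, add_mul, mul_sub, mul_add, Finset.sum_sub_distrib,
      Finset.sum_add_distrib]
    rw [shift1 v w, shift2 v w, h4, h5]; ring
  calc ∑ j : ZMod N, latLap ε v j * w j
      = (∑ j : ZMod N, (v (j+1) + v (j-1) - 2 * v j) * w j) / ε ^ 2 := by
        rw [Finset.sum_div]
        refine Finset.sum_congr rfl fun j _ => ?_
        simp only [latLap]; rw [div_mul_eq_mul_div]
    _ = (∑ j : ZMod N, v j * (w (j+1) + w (j-1) - 2 * w j)) / ε ^ 2 := by rw [key]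
    _ = ∑ j : ZMod N, v j * latLap ε w j := by
        rw [Finset.sum_div]
        refine Finset.sum_congr rfl fun j _ => ?_
        simp only [latLap]; rw [mul_div_assoc]

lemma dplus_inner (ε : ℝ) {N : ℕ} [NeZero N] (v w : ZMod N → ℝ) :
    ∑ j : ZMod N, latDplus ε v j * latDplus ε w j
      = - ∑ j : ZMod N, latLap ε v j * w j := by
  have h4 : ∑ j : ZMod N, 2 * v j * w j = 2 * ∑ j : ZMod N, v j * w j := by
    rw [Finset.mul_sum]; exact Finset.sum_congr rfl fun j _ => mul_assoc _ _ _
  have key : ∑ j : ZMod N, (v (j+1) - v j) * (w (j+1) - w j)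
      = - ∑ j : ZMod N, (v (j+1) + v (j-1) - 2 * v j) * w j := by
    simp only [sub_mul, add_mul, mul_sub, Finset.sum_sub_distrib, Finset.sum_add_distrib,
      neg_add, neg_sub]
    rw [shift3 v w, h4]
    have h2 := shift2 v w
    linarith
  calc ∑ j : ZMod N, latDplus ε v j * latDplus ε w j
      = (∑ j : ZMod N, (v (j+1) - v j) * (w (j+1) - w j)) / ε ^ 2 := by
        rw [Finset.sum_div]
        refine Finset.sum_congr rfl fun j _ => ?_
        simp only [latDplus]; rw [div_mul_div_comm, ← pow_two]
    _ = (- ∑ j : ZMod N, (v (j+1) + v (j-1) - 2 * v j) * w j) / ε ^ 2 := by rw [key]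
    _ = - ∑ j : ZMod N, latLap ε v j * w j := by
        rw [neg_div, Finset.sum_div]
        congr 1
        refine Finset.sum_congr rfl fun j _ => ?_
        simp only [latLap]; rw [div_mul_eq_mul_div]

lemma lapIter_symm (ε : ℝ) {N : ℕ} [NeZero N] (m : ℕ) (v w : ZMod N → ℝ) :
    ∑ j : ZMod N, (latLap ε)^[m] v j * w j = ∑ j : ZMod N, v j * (latLap ε)^[m] w j := by
  induction m generalizing v w with
  | zero => simp
  | succ m ih =>
      rw [Function.iterate_succ_apply', lap_symm, ih, Function.iterate_succ_apply]

lemma latD_inner (ε : ℝ) {N : ℕ} [NeZero N] (α : ℕ) (v w : ZMod N → ℝ) :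
    ∑ j : ZMod N, latD ε α v j * latD ε α w j
      = (-1 : ℝ) ^ α * ∑ j : ZMod N, (latLap ε)^[α] v j * w j := by
  rcases Nat.even_or_odd α with ⟨m, hm⟩ | ⟨m, hm⟩
  · subst hm
    have hd : ∀ x : ZMod N → ℝ, latD ε (m + m) x = (latLap ε)^[m] x := by
      intro x
      rw [latD, if_pos (by omega : (m + m) % 2 = 0)]
      have : (m + m) / 2 = m := by omega
      rw [this]
    simp only [hd]
    rw [Even.neg_one_pow ⟨m, rfl⟩, one_mul,
      show (latLap ε)^[m + m] v = (latLap ε)^[m] ((latLap ε)^[m] v) from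
        Function.iterate_add_apply _ m m v]
    exact (lapIter_symm ε m ((latLap ε)^[m] v) w).symm
  · subst hm
    have hd : ∀ x : ZMod N → ℝ, latD ε (2 * m + 1) x = latDplus ε ((latLap ε)^[m] x) := by
      intro x
      rw [latD, if_neg (by omega : ¬ (2 * m + 1) % 2 = 0)]
      have : (2 * m + 1) / 2 = m := by omega
      rw [this]
    simp only [hd]
    rw [dplus_inner,
      show latLap ε ((latLap ε)^[m] v) = (latLap ε)^[m + 1] v from
        (Function.iterate_succ_apply' _ m v).symm]
    have h3 : ∑ j : ZMod N, (latLap ε)^[m + 1] v j * (latLap ε)^[m] w j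
        = ∑ j : ZMod N, (latLap ε)^[m + (m + 1)] v j * w j := by
      rw [← lapIter_symm]
      simp only [← Function.iterate_add_apply]
    rw [h3, show m + (m + 1) = 2 * m + 1 from by omega,
      Odd.neg_one_pow ⟨m, by ring⟩]
    ring

lemma update_eq {N : ℕ} [NeZero N] (u : ZMod N → ℝ) (i : ZMod N) (s : ℝ) :
    Function.update u i s = fun j => u j + (s - u i) * (Pi.single i 1 : ZMod N → ℝ) j := by
  funext j
  by_cases h : j = i
  · subst h; simp
  · simp [Function.update_of_ne h, Pi.single_apply, h]

/-- **Force formula for the quadratic discrete potential.**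
The force on particle `i`, `F_i = -(1/ε) ∂U/∂u_i`, equals
`-Σ_{k=0}^n (-1)^k A_k (Δ_ε^k u)_i`. -/
theorem quadratic_force_formula
    (n : ℕ) (hn : 1 ≤ n) (A : ℕ → ℝ) (N : ℕ) [NeZero N] (ε : ℝ) (hε : 0 < ε)
    (u : ZMod N → ℝ) (i : ZMod N) :
    -(1 / ε) * deriv (fun s : ℝ => Upot n A ε (Function.update u i s)) (u i)
      = - ∑ k ∈ Finset.range (n + 1), (-1 : ℝ) ^ k * A k * ((latLap ε)^[k] u i) := by
  set P : ℕ → ZMod N → ℝ := fun α j => latD ε α u j with hP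
  set Q : ℕ → ZMod N → ℝ := fun α j => latD ε α (Pi.single i (1 : ℝ)) j with hQ
  -- rewrite the potential along the update line
  have hrw : ∀ s : ℝ, Upot n A ε (Function.update u i s)
      = ∑ j : ZMod N, ε * ((1 / 2) *
          ∑ α ∈ Finset.range (n + 1), A α * (P α j + (s - u i) * Q α j) ^ 2) := by
    intro s
    rw [Upot, update_eq]
    refine Finset.sum_congr rfl fun j _ => ?_
    congr 1
    congr 1
    refine Finset.sum_congr rfl fun α _ => ?_
    rw [latD_add_smul ε α u (Pi.single i (1 : ℝ)) (s - u i)]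
  -- the derivative
  have key : ∀ P₀ Q₀ t : ℝ, HasDerivAt (fun s : ℝ => (P₀ + (s - t) * Q₀) ^ 2) (2 * P₀ * Q₀) t := by
    intro P₀ Q₀ t
    have h : HasDerivAt (fun s : ℝ => P₀ + (s - t) * Q₀) Q₀ t := by
      have h1 := ((hasDerivAt_id t).sub_const t).mul_const Q₀
      simpa using h1.const_add P₀
    have h2 := h.fun_pow 2
    simpa using h2
  have hf : HasDerivAt (fun s : ℝ => Upot n A ε (Function.update u i s))
      (∑ j : ZMod N, ε * ((1 / 2) *
        ∑ α ∈ Finset.range (n + 1), A α * (2 * P α j * Q α j))) (u i) := by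
    have : (fun s : ℝ => Upot n A ε (Function.update u i s))
        = fun s : ℝ => ∑ j : ZMod N, ε * ((1 / 2) *
            ∑ α ∈ Finset.range (n + 1), A α * (P α j + (s - u i) * Q α j) ^ 2) := by
      funext s; exact hrw s
    rw [this]
    refine HasDerivAt.fun_sum fun j _ => ?_
    refine HasDerivAt.const_mul ε ?_
    refine HasDerivAt.const_mul (1 / 2 : ℝ) ?_
    exact HasDerivAt.fun_sum fun α _ => (key (P α j) (Q α j) (u i)).const_mul (A α)
  rw [hf.deriv]
  -- evaluate the derivative sum
  have hdelta : ∀ α, ∑ j : ZMod N, P α j * Q α j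
      = (-1 : ℝ) ^ α * ((latLap ε)^[α] u i) := by
    intro α
    rw [hP, hQ]
    simp only
    rw [latD_inner]
    congr 1
    simp [Pi.single_apply, mul_ite]
  have hD : (∑ j : ZMod N, ε * ((1 / 2) *
        ∑ α ∈ Finset.range (n + 1), A α * (2 * P α j * Q α j)))
      = ε * ∑ k ∈ Finset.range (n + 1), (-1 : ℝ) ^ k * A k * ((latLap ε)^[k] u i) := by
    rw [← Finset.mul_sum]
    congr 1
    have step1 : ∀ j : ZMod N, (1 / 2 : ℝ) *
        ∑ α ∈ Finset.range (n + 1), A α * (2 * P α j * Q α j)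
        = ∑ α ∈ Finset.range (n + 1), A α * (P α j * Q α j) := by
      intro j
      rw [Finset.mul_sum]
      exact Finset.sum_congr rfl fun α _ => by ring
    simp only [step1]
    rw [Finset.sum_comm]
    refine Finset.sum_congr rfl fun k _ => ?_
    rw [← Finset.mul_sum, hdelta k]
    ring
  rw [hD]
  field_simp

end
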